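/- arXiv:1511.08009 — 2 statements merged into one kernel-verified Lean document; each statement's English description precedes it below -/
import Mathlib

section
/- Let C be a planar convex body that is k_C-rotationally symmetric about a point p in its interior, where k_C is a composite integer whose smallest divisor χ greater than 1 satisfies χ ≥ 3. Then d_M(P_a) = d_M(P_b) for all divisors a, b > 1 of k_C (a chain of equalities among the values d_M(P_{k_1}), …, d_M(P_{k_n}) over the divisors k_1 < … < k_n of k_C greater than 1) if and only if d_M(P_χ) = R. -/
open Metric Set

/-- Rotation of angle `α` about the point `p` in the plane `ℂ`. -/
noncomputable def rot (p : ℂ) (α : ℝ) : ℂ → ℂ :=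
  fun z => p + Complex.exp (α * Complex.I) * (z - p)

/-- A planar convex body: a compact convex subset of the plane with nonempty interior. -/
def IsConvexBody (C : Set ℂ) : Prop :=
  IsCompact C ∧ Convex ℝ C ∧ (interior C).Nonempty

/-- `C` is `k`-rotationally symmetric about `p`: the rotation of angle `2π/k`
about `p` maps `C` onto itself. -/
def IsRotSym (C : Set ℂ) (p : ℂ) (k : ℕ) : Prop :=
  rot p (2 * Real.pi / k) '' C = C

/-- The closed convex sector at `p` spanned by `x - p` and `ρ_k(x) - p`. -/
noncomputable def sector (p x : ℂ) (k : ℕ) : Set ℂ :=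
  {z | ∃ a b : ℝ, 0 ≤ a ∧ 0 ≤ b ∧
    z = p + (a : ℂ) * (x - p) + (b : ℂ) * (rot p (2 * Real.pi / k) x - p)}

/-- The maximum relative diameter of the standard `k`-partition of `C`
(with center `p` and endpoint `x`): the diameter of one piece `C ∩ S_k`. -/
noncomputable def dM (C : Set ℂ) (p x : ℂ) (k : ℕ) : ℝ :=
  Metric.diam (C ∩ sector p x k)

/-- The circumradius of `C` with respect to `p`: `sup_{y ∈ C} dist p y`. -/
noncomputable def circumrad (C : Set ℂ) (p : ℂ) : ℝ :=
  ⨆ y ∈ C, dist p y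

/- ===================== auxiliary lemmas ===================== -/

lemma tail_ineq (L N1 N2 Q R : ℝ) (hRe : L ≤ N1+N2-2*Q) (hQsq : N1*N2 ≤ 4*Q^2)
    (h1 : N1 ≤ R^2) (h2 : N2 ≤ R^2) (hN1 : 0 ≤ N1) (hN2 : 0 ≤ N2) (hQ : 0 ≤ Q) :
    L ≤ R^2 := by
  rcases le_total N1 N2 with h | h
  · have : N1 ≤ 2*Q := by nlinarith
    linarith
  · have : N2 ≤ 2*Q := by nlinarith
    linarith

lemma real_core (a1 b1 a2 b2 t V R : ℝ) (ha1 : 0 ≤ a1) (hb1 : 0 ≤ b1)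
    (ha2 : 0 ≤ a2) (hb2 : 0 ≤ b2) (ht1 : 1/2 ≤ t) (ht2 : t ≤ 1)
    (hV : 0 ≤ V) (_hR : 0 ≤ R)
    (h1 : (a1^2 + 2*a1*b1*t + b1^2) * V ≤ R^2)
    (h2 : (a2^2 + 2*a2*b2*t + b2^2) * V ≤ R^2) :
    ((a1-a2)^2 + 2*(a1-a2)*(b1-b2)*t + (b1-b2)^2) * V ≤ R^2 := by
  have hN1nn : 0 ≤ (a1^2 + 2*a1*b1*t + b1^2) * V := by
    have : 0 ≤ a1^2 + 2*a1*b1*t + b1^2 := by nlinarith [sq_nonneg (a1-b1), mul_nonneg ha1 hb1]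
    positivity
  have hN2nn : 0 ≤ (a2^2 + 2*a2*b2*t + b2^2) * V := by
    have : 0 ≤ a2^2 + 2*a2*b2*t + b2^2 := by nlinarith [sq_nonneg (a2-b2), mul_nonneg ha2 hb2]
    positivity
  have hQnn : 0 ≤ (a1+b1)*(a2+b2)*V/2 := by positivity
  have hRe : ((a1-a2)^2 + 2*(a1-a2)*(b1-b2)*t + (b1-b2)^2) * V
      ≤ (a1^2 + 2*a1*b1*t + b1^2) * V + (a2^2 + 2*a2*b2*t + b2^2) * V
        - 2*((a1+b1)*(a2+b2)*V/2) := by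
    have key : (a1^2 + 2*a1*b1*t + b1^2) * V + (a2^2 + 2*a2*b2*t + b2^2) * V
        - 2*((a1+b1)*(a2+b2)*V/2)
        - ((a1-a2)^2 + 2*(a1-a2)*(b1-b2)*t + (b1-b2)^2) * V
        = ((a1*a2+b1*b2) + (a1*b2+a2*b1)*(2*t-1))*V := by ring
    have pos : 0 ≤ ((a1*a2+b1*b2) + (a1*b2+a2*b1)*(2*t-1))*V := by
      have : 0 ≤ (a1*a2+b1*b2) + (a1*b2+a2*b1)*(2*t-1) := by
        nlinarith [mul_nonneg ha1 ha2, mul_nonneg hb1 hb2, mul_nonneg ha1 hb2, mul_nonneg ha2 hb1]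
      positivity
    linarith
  have hQsq : ((a1^2 + 2*a1*b1*t + b1^2) * V) * ((a2^2 + 2*a2*b2*t + b2^2) * V)
      ≤ 4 * ((a1+b1)*(a2+b2)*V/2)^2 := by
    have e1 : (a1^2 + 2*a1*b1*t + b1^2) * V ≤ (a1+b1)^2 * V := by
      have : a1^2 + 2*a1*b1*t + b1^2 ≤ (a1+b1)^2 := by nlinarith [mul_nonneg ha1 hb1]
      exact mul_le_mul_of_nonneg_right this hV
    have e2 : (a2^2 + 2*a2*b2*t + b2^2) * V ≤ (a2+b2)^2 * V := by
      have : a2^2 + 2*a2*b2*t + b2^2 ≤ (a2+b2)^2 := by nlinarith [mul_nonneg ha2 hb2]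
      exact mul_le_mul_of_nonneg_right this hV
    calc ((a1^2 + 2*a1*b1*t + b1^2) * V) * ((a2^2 + 2*a2*b2*t + b2^2) * V)
        ≤ ((a1+b1)^2 * V) * ((a2+b2)^2*V) := mul_le_mul e1 e2 hN2nn (by positivity)
      _ = 4 * ((a1+b1)*(a2+b2)*V/2)^2 := by ring
  exact tail_ineq _ _ _ _ _ hRe hQsq h1 h2 hN1nn hN2nn hQnn

lemma exp_decomp {γ θ : ℝ} (hγ : 0 ≤ γ) (hγθ : γ ≤ θ) (hθ : θ < Real.pi) :
    ∃ c d : ℝ, 0 ≤ c ∧ 0 ≤ d ∧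
      Complex.exp (γ * Complex.I) = (c : ℂ) + (d : ℂ) * Complex.exp (θ * Complex.I) := by
  rcases eq_or_lt_of_le (hγ.trans hγθ) with h0 | hθpos
  · have hγ0 : γ = 0 := le_antisymm (h0 ▸ hγθ) hγ
    refine ⟨1, 0, zero_le_one, le_refl 0, ?_⟩
    rw [hγ0, ← h0]
    simp
  · have hsθ : 0 < Real.sin θ := Real.sin_pos_of_pos_of_lt_pi hθpos hθ
    refine ⟨Real.sin (θ - γ) / Real.sin θ, Real.sin γ / Real.sin θ, ?_, ?_, ?_⟩
    · exact div_nonneg (Real.sin_nonneg_of_nonneg_of_le_pi (by linarith) (by linarith)) hsθ.le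
    · exact div_nonneg (Real.sin_nonneg_of_nonneg_of_le_pi hγ (by linarith)) hsθ.le
    · rw [Complex.exp_mul_I, Complex.exp_mul_I]
      rw [← Complex.ofReal_cos, ← Complex.ofReal_sin, ← Complex.ofReal_cos, ← Complex.ofReal_sin]
      apply Complex.ext
      · simp only [Complex.add_re, Complex.ofReal_re, Complex.mul_re, Complex.mul_im,
          Complex.I_re, Complex.I_im, Complex.ofReal_im, Complex.add_im]
        rw [Real.sin_sub]
        field_simp
        ring
      · simp only [Complex.add_re, Complex.ofReal_re, Complex.mul_re, Complex.mul_im,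
          Complex.I_re, Complex.I_im, Complex.ofReal_im, Complex.add_im]
        field_simp
        ring

lemma rot_sub (p x : ℂ) (θ : ℝ) : rot p θ x - p = Complex.exp (θ * Complex.I) * (x - p) := by
  simp [rot]

lemma theta_lt_pi {m : ℕ} (hm : 3 ≤ m) : 2 * Real.pi / m < Real.pi := by
  have hπ : 0 < Real.pi := Real.pi_pos
  have hm' : (3:ℝ) ≤ (m:ℝ) := by exact_mod_cast hm
  rw [div_lt_iff₀ (by linarith : (0:ℝ) < (m:ℝ))]
  nlinarith

lemma sector_mono {p x : ℂ} {m n : ℕ} (hm : 3 ≤ m) (hmn : m ≤ n) :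
    sector p x n ⊆ sector p x m := by
  intro z hz
  obtain ⟨a, b, ha, hb, hzeq⟩ := hz
  have hm0 : (0:ℝ) < (m:ℝ) := by
    have : (3:ℝ) ≤ (m:ℝ) := by exact_mod_cast hm
    linarith
  have hπ : 0 < Real.pi := Real.pi_pos
  have hγ : 0 ≤ 2 * Real.pi / n := by positivity
  have hγθ : 2 * Real.pi / n ≤ 2 * Real.pi / m := by
    apply div_le_div_of_nonneg_left (by linarith) hm0
    exact_mod_cast hmn
  obtain ⟨c, d, hc, hd, hdec⟩ := exp_decomp hγ hγθ (theta_lt_pi hm)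
  refine ⟨a + b * c, b * d, by positivity, by positivity, ?_⟩
  rw [rot_sub] at hzeq ⊢
  rw [hzeq, hdec]
  push_cast
  ring

lemma dist_le_circumrad {C : Set ℂ} (hb : Bornology.IsBounded C) (p : ℂ) {y : ℂ}
    (hy : y ∈ C) : dist p y ≤ circumrad C p := by
  obtain ⟨r, hr⟩ := hb.subset_closedBall p
  have hbdd : BddAbove (Set.range fun z => ⨆ _ : z ∈ C, dist p z) := by
    refine ⟨max r 0, ?_⟩
    rintro _ ⟨z, rfl⟩
    refine Real.iSup_le (fun hz => ?_) (le_max_right r 0)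
    have := hr hz
    rw [Metric.mem_closedBall] at this
    exact le_max_of_le_left (by rwa [dist_comm])
  calc dist p y = ⨆ _ : y ∈ C, dist p y := by rw [ciSup_pos hy]
    _ ≤ circumrad C p := le_ciSup hbdd y

lemma rot_iter_mem {C : Set ℂ} {p : ℂ} {θ : ℝ} (hsym : rot p θ '' C = C) :
    ∀ (j : ℕ) {z : ℂ}, z ∈ C →
      p + Complex.exp ((((j : ℝ) * θ : ℝ) : ℂ) * Complex.I) * (z - p) ∈ C := by
  intro j
  induction j with
  | zero => intro z hz; push_cast; simpa using hz
  | succ n ih =>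
    intro z hz
    have h1 : p + Complex.exp ((((n : ℝ) * θ : ℝ) : ℂ) * Complex.I) * (z - p) ∈ C := ih hz
    have h2 := Set.mem_image_of_mem (rot p θ) h1
    rw [hsym] at h2
    have heq : rot p θ (p + Complex.exp ((((n : ℝ) * θ : ℝ) : ℂ) * Complex.I) * (z - p))
        = p + Complex.exp (((((n+1 : ℕ) : ℝ) * θ : ℝ) : ℂ) * Complex.I) * (z - p) := by
      rw [rot]
      simp only [add_sub_cancel_left]
      rw [← mul_assoc, ← Complex.exp_add]
      congr 2
      push_cast
      ring
    rwa [heq] at h2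

lemma abs_comb_le {v e : ℂ} (he : ‖e‖ = 1) (ht : 1/2 ≤ e.re) {a1 b1 a2 b2 R : ℝ}
    (ha1 : 0 ≤ a1) (hb1 : 0 ≤ b1) (ha2 : 0 ≤ a2) (hb2 : 0 ≤ b2)
    (h1 : ‖((a1:ℂ) + (b1:ℂ)*e)*v‖ ≤ R)
    (h2 : ‖((a2:ℂ) + (b2:ℂ)*e)*v‖ ≤ R) :
    ‖(((a1-a2 : ℝ):ℂ) + ((b1-b2 : ℝ):ℂ)*e)*v‖ ≤ R := by
  have hR0 : 0 ≤ R := (norm_nonneg _).trans h1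
  have he2 : e.re*e.re + e.im*e.im = 1 := by
    have h := Complex.sq_norm e
    rw [he] at h
    simpa [Complex.normSq_apply] using h.symm
  have ht2 : e.re ≤ 1 := by
    calc e.re ≤ |e.re| := le_abs_self _
      _ ≤ ‖e‖ := Complex.abs_re_le_norm e
      _ = 1 := he
  have hnorm : ∀ A B : ℝ, Complex.normSq (((A:ℂ) + (B:ℂ)*e)*v)
      = (A^2 + 2*A*B*e.re + B^2) * Complex.normSq v := by
    intro A B
    rw [Complex.normSq_mul]
    simp only [Complex.normSq_apply, Complex.add_re, Complex.add_im, Complex.mul_re,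
      Complex.mul_im, Complex.ofReal_re, Complex.ofReal_im]
    ring_nf
    linear_combination (B^2 * (v.re*v.re + v.im*v.im)) * he2
  have hsq : ∀ A B : ℝ, ‖((A:ℂ) + (B:ℂ)*e)*v‖ ≤ R →
      (A^2 + 2*A*B*e.re + B^2) * Complex.normSq v ≤ R^2 := by
    intro A B h
    rw [← hnorm, ← Complex.sq_norm]
    exact pow_le_pow_left₀ (norm_nonneg _) h 2
  have key := real_core a1 b1 a2 b2 e.re (Complex.normSq v) R ha1 hb1 ha2 hb2 ht ht2
    (Complex.normSq_nonneg v) hR0 (hsq _ _ h1) (hsq _ _ h2)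
  rw [Complex.norm_def, hnorm]
  calc Real.sqrt (((a1-a2)^2 + 2*(a1-a2)*(b1-b2)*e.re + (b1-b2)^2) * Complex.normSq v)
      ≤ Real.sqrt (R^2) := Real.sqrt_le_sqrt key
    _ = R := Real.sqrt_sq hR0

lemma circ_nonneg {C : Set ℂ} (hb : Bornology.IsBounded C) {p : ℂ} (hp : p ∈ C) :
    0 ≤ circumrad C p := by
  have := dist_le_circumrad hb p hp
  simpa using this

lemma p_mem_sector (p x : ℂ) (k : ℕ) : p ∈ sector p x k :=
  ⟨0, 0, le_refl 0, le_refl 0, by simp⟩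

lemma dM_eq_circumrad (C : Set ℂ) (p x : ℂ) (k : ℕ) (hC : IsConvexBody C)
    (hk : 9 ≤ k) (hsym : IsRotSym C p k) (hp : p ∈ interior C) (hxp : x ≠ p) :
    dM C p x k = circumrad C p := by
  have hbC : Bornology.IsBounded C := hC.1.isBounded
  have hpC : p ∈ C := interior_subset hp
  have hk3 : 3 ≤ k := by omega
  have hk0 : (0:ℝ) < (k:ℝ) := by
    have : (9:ℝ) ≤ (k:ℝ) := by exact_mod_cast hk
    linarith
  have hπ : 0 < Real.pi := Real.pi_pos
  have hθpos : 0 < 2 * Real.pi / k := by positivity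
  have hθπ3 : 2 * Real.pi / k ≤ Real.pi / 3 := by
    rw [div_le_div_iff₀ hk0 (by norm_num : (0:ℝ) < 3)]
    have : (9:ℝ) ≤ (k:ℝ) := by exact_mod_cast hk
    nlinarith
  have hcos : 1/2 ≤ Real.cos (2 * Real.pi / k) := by
    have h1 : Real.cos (Real.pi/3) ≤ Real.cos (2 * Real.pi / k) :=
      Real.cos_le_cos_of_nonneg_of_le_pi hθpos.le (by linarith) hθπ3
    rwa [Real.cos_pi_div_three] at h1
  have habse : ‖Complex.exp (((2 * Real.pi / k : ℝ):ℂ) * Complex.I)‖ = 1 :=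
    Complex.norm_exp_ofReal_mul_I _
  have here : (Complex.exp (((2 * Real.pi / k : ℝ):ℂ) * Complex.I)).re
      = Real.cos (2 * Real.pi / k) := Complex.exp_ofReal_mul_I_re _
  have hbS : Bornology.IsBounded (C ∩ sector p x k) := hbC.subset inter_subset_left
  apply le_antisymm
  · -- diam ≤ circumrad
    apply Metric.diam_le_of_forall_dist_le (circ_nonneg hbC hpC)
    rintro u ⟨huC, a1, b1, ha1, hb1, hueq⟩ w ⟨hwC, a2, b2, ha2, hb2, hweq⟩
    rw [rot_sub] at hueq hweq
    have h1 : ‖((a1:ℂ) + (b1:ℂ)*Complex.exp (((2 * Real.pi / k : ℝ):ℂ) * Complex.I))*(x-p)‖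
        ≤ circumrad C p := by
      have heq : ((a1:ℂ) + (b1:ℂ)*Complex.exp (((2 * Real.pi / k : ℝ):ℂ) * Complex.I))*(x-p) = u - p := by
        rw [hueq]; ring
      rw [heq, ← Complex.dist_eq, dist_comm]
      exact dist_le_circumrad hbC p huC
    have h2 : ‖((a2:ℂ) + (b2:ℂ)*Complex.exp (((2 * Real.pi / k : ℝ):ℂ) * Complex.I))*(x-p)‖
        ≤ circumrad C p := by
      have heq : ((a2:ℂ) + (b2:ℂ)*Complex.exp (((2 * Real.pi / k : ℝ):ℂ) * Complex.I))*(x-p) = w - p := by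
        rw [hweq]; ring
      rw [heq, ← Complex.dist_eq, dist_comm]
      exact dist_le_circumrad hbC p hwC
    have key := abs_comb_le habse (here ▸ hcos) ha1 hb1 ha2 hb2 h1 h2
    have heq2 : u - w = (((a1-a2 : ℝ):ℂ) + ((b1-b2 : ℝ):ℂ)*Complex.exp (((2 * Real.pi / k : ℝ):ℂ) * Complex.I))*(x-p) := by
      rw [hueq, hweq]; push_cast; ring
    rw [Complex.dist_eq, heq2]
    exact key
  · -- circumrad ≤ diam
    have hne : C.Nonempty := ⟨p, hpC⟩
    obtain ⟨y, hyC, hymax⟩ := hC.1.exists_isMaxOn hne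
      ((continuous_const.dist continuous_id).continuousOn)
    have hcirc : circumrad C p = dist p y := by
      apply le_antisymm
      · exact Real.iSup_le (fun z => Real.iSup_le (fun hz => hymax hz) dist_nonneg) dist_nonneg
      · exact dist_le_circumrad hbC p hyC
    rcases eq_or_ne y p with rfl | hyp
    · rw [hcirc]
      simpa [dM] using Metric.diam_nonneg
    · have hzne : y - p ≠ 0 := sub_ne_zero_of_ne hyp
      have hvne : x - p ≠ 0 := sub_ne_zero_of_ne hxp
      set w := (y - p) / (x - p) with hwdef
      have hβ1 : -Real.pi < w.arg := Complex.neg_pi_lt_arg w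
      have hβ2 : w.arg ≤ Real.pi := Complex.arg_le_pi w
      set m : ℤ := ⌈-w.arg / (2 * Real.pi / k)⌉ with hmdef
      have hm1 : -w.arg / (2 * Real.pi / k) ≤ (m:ℝ) := Int.le_ceil _
      have hm2 : (m:ℝ) < -w.arg / (2 * Real.pi / k) + 1 := Int.ceil_lt_add_one _
      have hγ0 : 0 ≤ w.arg + m * (2 * Real.pi / k) := by
        have := (div_le_iff₀ hθpos).mp hm1
        linarith
      have hγθ : w.arg + m * (2 * Real.pi / k) ≤ 2 * Real.pi / k := by
        have h := mul_lt_mul_of_pos_right hm2 hθpos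
        rw [add_mul, div_mul_cancel₀, one_mul] at h
        · linarith
        · exact ne_of_gt hθpos
      set j : ℕ := (m % (k:ℤ)).toNat with hjdef
      have hkz : (k:ℤ) ≠ 0 := by
        have : k ≠ 0 := by omega
        exact_mod_cast this
      have hjm : (j : ℤ) = m % (k:ℤ) := Int.toNat_of_nonneg (Int.emod_nonneg m hkz)
      have hkθ : (k:ℝ) * (2 * Real.pi / k) = 2 * Real.pi := by
        field_simp
      have hjr : (j:ℝ) = (m:ℝ) - (k:ℝ) * ((m / (k:ℤ) : ℤ) : ℝ) := by
        have h : (j:ℤ) = m - (k:ℤ) * (m / (k:ℤ)) := by rw [hjm, Int.emod_def]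
        exact_mod_cast h
      have hexpj : Complex.exp ((((j:ℝ) * (2 * Real.pi / k) : ℝ):ℂ) * Complex.I)
          = Complex.exp ((((m:ℝ) * (2 * Real.pi / k) : ℝ):ℂ) * Complex.I) := by
        have hr : (j:ℝ) * (2 * Real.pi / k)
            = (m:ℝ) * (2 * Real.pi / k) + ((-(m / (k:ℤ)) : ℤ):ℝ) * (2 * Real.pi) := by
          rw [hjr]
          push_cast
          linear_combination (-(((m / (k:ℤ) : ℤ) : ℝ))) * hkθ
        have harg : (((j:ℝ) * (2 * Real.pi / k) : ℝ):ℂ) * Complex.I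
            = (((m:ℝ) * (2 * Real.pi / k) : ℝ):ℂ) * Complex.I
              + ((-(m / (k:ℤ)) : ℤ):ℂ) * (2 * (Real.pi:ℂ) * Complex.I) := by
          rw [hr]
          push_cast
          ring
        rw [harg, Complex.exp_add, Complex.exp_int_mul_two_pi_mul_I, mul_one]
      have hy'C : p + Complex.exp ((((j:ℝ) * (2 * Real.pi / k) : ℝ):ℂ) * Complex.I) * (y - p) ∈ C :=
        rot_iter_mem hsym j hyC
      have hdisty' : dist p (p + Complex.exp ((((j:ℝ) * (2 * Real.pi / k) : ℝ):ℂ) * Complex.I) * (y - p))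
          = dist p y := by
        rw [Complex.dist_eq, Complex.dist_eq]
        have heq : p - (p + Complex.exp ((((j:ℝ) * (2 * Real.pi / k) : ℝ):ℂ) * Complex.I) * (y - p))
            = Complex.exp ((((j:ℝ) * (2 * Real.pi / k) : ℝ):ℂ) * Complex.I) * (p - y) := by ring
        rw [heq, norm_mul, Complex.norm_exp_ofReal_mul_I, one_mul]
      have hy'S : p + Complex.exp ((((j:ℝ) * (2 * Real.pi / k) : ℝ):ℂ) * Complex.I) * (y - p)
          ∈ sector p x k := by
        obtain ⟨c, d, hc, hd, hdec⟩ := exp_decomp hγ0 hγθ (theta_lt_pi hk3)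
        refine ⟨‖w‖ * c, ‖w‖ * d,
          mul_nonneg (norm_nonneg w) hc, mul_nonneg (norm_nonneg w) hd, ?_⟩
        rw [rot_sub]
        have hwv : w * (x - p) = y - p := by
          rw [hwdef]; exact div_mul_cancel₀ _ hvne
        have hy_p : y - p = ((‖w‖ : ℝ):ℂ) * Complex.exp ((w.arg:ℂ) * Complex.I) * (x - p) := by
          rw [Complex.norm_mul_exp_arg_mul_I w]
          exact hwv.symm
        have hkey : Complex.exp ((((m:ℝ) * (2 * Real.pi / k) : ℝ):ℂ) * Complex.I)
              * Complex.exp ((w.arg:ℂ) * Complex.I)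
            = (c:ℂ) + (d:ℂ) * Complex.exp (((2 * Real.pi / k : ℝ):ℂ) * Complex.I) := by
          rw [← Complex.exp_add]
          rw [← hdec]
          congr 1
          push_cast
          ring
        rw [hexpj, hy_p]
        revert hkey
        generalize Complex.exp ((((m:ℝ) * (2 * Real.pi / k) : ℝ):ℂ) * Complex.I) = E1
        generalize Complex.exp ((w.arg:ℂ) * Complex.I) = E2
        generalize Complex.exp (((2 * Real.pi / k : ℝ):ℂ) * Complex.I) = E3
        intro hkey
        push_cast
        linear_combination ((‖w‖ : ℝ) : ℂ) * (x - p) * hkey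
      calc circumrad C p = dist p y := hcirc
        _ = dist p (p + Complex.exp ((((j:ℝ) * (2 * Real.pi / k) : ℝ):ℂ) * Complex.I) * (y - p)) :=
            hdisty'.symm
        _ ≤ Metric.diam (C ∩ sector p x k) :=
            Metric.dist_le_diam_of_mem hbS ⟨hpC, p_mem_sector p x k⟩ ⟨hy'C, hy'S⟩

/-- For a multi-rotationally symmetric planar convex body with composite maximal
degree `k_C` and minimal degree `χ = minFac k_C ≥ 3`, the values `d_M(P_a)` over
all divisors `a > 1` of `k_C` all coincide iff `d_M(P_χ) = R`. -/
theorem stmt_5 (C : Set ℂ) (p x : ℂ) (kC : ℕ) (hC : IsConvexBody C)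
    (hk2 : 2 ≤ kC) (hcomp : ¬ kC.Prime) (hmin : 3 ≤ kC.minFac)
    (hsym : IsRotSym C p kC) (hp : p ∈ interior C)
    (hx : x ∈ frontier C) (hxr : dist p x = infDist p (frontier C)) :
    (∀ a b : ℕ, a ∣ kC → b ∣ kC → 1 < a → 1 < b → dM C p x a = dM C p x b)
      ↔ dM C p x kC.minFac = circumrad C p := by
  have hbC : Bornology.IsBounded C := hC.1.isBounded
  have hkpos : 0 < kC := by omega
  have hχdvd : kC.minFac ∣ kC := Nat.minFac_dvd kC
  have hk9 : 9 ≤ kC := by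
    have hne1 : kC ≠ 1 := by omega
    have hprime : (kC.minFac).Prime := Nat.minFac_prime hne1
    have hkeq : kC.minFac * (kC / kC.minFac) = kC := Nat.mul_div_cancel' hχdvd
    have hqdvd : (kC / kC.minFac) ∣ kC := Nat.div_dvd_of_dvd hχdvd
    have hq1 : kC / kC.minFac ≠ 1 := by
      intro h
      rw [h, mul_one] at hkeq
      exact hcomp (hkeq ▸ hprime)
    have hq0 : kC / kC.minFac ≠ 0 := by
      intro h
      rw [h, mul_zero] at hkeq
      omega
    have h2q : 2 ≤ kC / kC.minFac := (Nat.two_le_iff _).mpr ⟨hq0, hq1⟩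
    have hle : kC.minFac ≤ kC / kC.minFac := Nat.minFac_le_of_dvd h2q hqdvd
    calc 9 = 3 * 3 := rfl
      _ ≤ kC.minFac * (kC / kC.minFac) := Nat.mul_le_mul hmin (le_trans hmin hle)
      _ = kC := hkeq
  have hxp : x ≠ p := by
    intro h
    exact Set.disjoint_left.mp disjoint_interior_frontier (h ▸ hp) hx
  have hmono : ∀ {a b : ℕ}, a ∣ kC → b ∣ kC → 1 < a → 1 < b → a ≤ b →
      dM C p x b ≤ dM C p x a := by
    intro a b ha hb ha1 _hb1 hab
    have h3a : 3 ≤ a := le_trans hmin (Nat.minFac_le_of_dvd ha1 ha)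
    exact Metric.diam_mono (inter_subset_inter_right C (sector_mono h3a hab))
      (hbC.subset inter_subset_left)
  have htop : dM C p x kC = circumrad C p := dM_eq_circumrad C p x kC hC hk9 hsym hp hxp
  have hχ1 : 1 < kC.minFac := by omega
  have hkC1 : 1 < kC := by omega
  constructor
  · intro h
    rw [h kC.minFac kC hχdvd dvd_rfl hχ1 hkC1]
    exact htop
  · intro h a b ha hb ha1 hb1
    have hall : ∀ c : ℕ, c ∣ kC → 1 < c → dM C p x c = circumrad C p := by
      intro c hc hc1
      have hχc : kC.minFac ≤ c := Nat.minFac_le_of_dvd hc1 hc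
      have hckC : c ≤ kC := Nat.le_of_dvd hkpos hc
      apply le_antisymm
      · rw [← h]
        exact hmono hχdvd hc hχ1 hc1 hχc
      · rw [← htop]
        exact hmono hc dvd_rfl hc1 hkC1 hckC
    rw [hall a ha ha1, hall b hb hb1]
end

section
/- Let C be a planar convex body that is k_C-rotationally symmetric about a point p in its interior, where k_C is a composite integer whose smallest divisor greater than 1 equals 3 (so C is multi-rotationally symmetric with minimal degree 3). Then d_M(P_3) ≠ R, i.e. diam(C ∩ S_3) ≠ R; equivalently, R < 2 r sin(π/3) = √3 · r. -/
open Metric Set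

lemma rot_comp (p : ℂ) (α β : ℝ) (z : ℂ) : rot p α (rot p β z) = rot p (α + β) z := by
  simp only [rot]
  rw [Complex.ofReal_add, add_mul, Complex.exp_add]
  ring

lemma rot_mem {C : Set ℂ} {p : ℂ} {α : ℝ} (h : rot p α '' C = C) :
    ∀ n : ℕ, ∀ y ∈ C, rot p (n * α) y ∈ C := by
  intro n
  induction n with
  | zero =>
    intro y hy
    simpa [rot] using hy
  | succ n ih =>
    intro y hy
    have h1 : rot p (n * α) y ∈ C := ih y hy
    have h2 : rot p α (rot p (n * α) y) ∈ C := by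
      rw [← h]; exact mem_image_of_mem _ h1
    rw [rot_comp] at h2
    have e : α + (n : ℝ) * α = ((n + 1 : ℕ) : ℝ) * α := by push_cast; ring
    rwa [e] at h2

set_option maxHeartbeats 1000000 in
/-- For a multi-rotationally symmetric planar convex body whose minimal degree
(the smallest divisor of the composite maximal degree `k_C` greater than 1)
equals `3`, one has `d_M(P_3) ≠ R`; equivalently `R < 2 r sin(π/3) = √3 r`. -/
theorem stmt_7 (C : Set ℂ) (p x : ℂ) (kC : ℕ) (hC : IsConvexBody C)
    (hk2 : 2 ≤ kC) (hcomp : ¬ kC.Prime) (hmin : kC.minFac = 3)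
    (hsym : IsRotSym C p kC) (hp : p ∈ interior C)
    (hx : x ∈ frontier C) (hxr : dist p x = infDist p (frontier C)) :
    dM C p x 3 ≠ circumrad C p ∧
      circumrad C p < 2 * infDist p (frontier C) * Real.sin (Real.pi / 3) ∧
      2 * Real.sin (Real.pi / 3) = Real.sqrt 3 := by
  obtain ⟨hcpt, hconv, hint⟩ := hC
  have hclosed : IsClosed C := hcpt.isClosed
  have hxC : x ∈ C := hclosed.frontier_subset hx
  set r : ℝ := infDist p (frontier C) with hrdef
  have hfr_ne : (frontier C).Nonempty := ⟨x, hx⟩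
  have hpnf : p ∉ frontier C := fun h => h.2 hp
  have hrpos : 0 < r := (isClosed_frontier.notMem_iff_infDist_pos hfr_ne).1 hpnf
  have hrne : r ≠ 0 := ne_of_gt hrpos
  set u : ℂ := x - p with hudef
  have hu_norm : ‖u‖ = r := by
    rw [hudef, ← Complex.dist_eq, dist_comm]; exact hxr
  -- arithmetic on kC
  have hk3 : (3 : ℕ) ∣ kC := hmin ▸ Nat.minFac_dvd kC
  obtain ⟨m, hm⟩ := hk3
  have hkC9 : 9 ≤ kC := by
    rcases Nat.lt_or_ge m 3 with h | h
    · interval_cases m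
      · omega
      · exact absurd (by rw [hm]; norm_num) hcomp
      · rw [hm] at hmin; norm_num [Nat.minFac] at hmin
    · omega
  have hkne : (kC : ℝ) ≠ 0 := by
    have : (0 : ℝ) < kC := by exact_mod_cast (by omega : 0 < kC)
    exact ne_of_gt this
  have hkpos : (0 : ℝ) < kC := by exact_mod_cast (by omega : 0 < kC)
  have hkC9R : (9 : ℝ) ≤ kC := by exact_mod_cast hkC9
  -- the inscribed ball
  have hball : ball p r ⊆ interior C := by
    have hdisj : Disjoint (ball p r) (frontier C) := Metric.disjoint_ball_infDist
    refine (convex_ball p r).isPreconnected.subset_left_of_subset_union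
      isOpen_interior isClosed_closure.isOpen_compl
      (disjoint_compl_right.mono_left interior_subset_closure) ?_
      ⟨p, mem_ball_self hrpos, hp⟩
    intro z hz
    by_cases h1 : z ∈ closure C
    · by_cases h2 : z ∈ interior C
      · exact Or.inl h2
      · exact absurd (⟨h1, h2⟩ : z ∈ frontier C) (disjoint_left.1 hdisj hz)
    · exact Or.inr h1
  -- C is contained in the closure of its interior
  have hCsub : C ⊆ closure (interior C) := by
    intro a ha
    have hcont : Continuous (fun t : ℝ => (1 - t) • p + t • a) := by continuity
    have htend : Filter.Tendsto (fun t : ℝ => (1 - t) • p + t • a)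
        (nhdsWithin 1 (Iio 1)) (nhds a) := by
      simpa using (hcont.tendsto 1).mono_left (nhdsWithin_le_nhds (s := Iio (1:ℝ)))
    apply mem_closure_of_tendsto htend
    have hev : ∀ᶠ t in nhdsWithin 1 (Iio 1), (0 : ℝ) < t :=
      (eventually_gt_nhds zero_lt_one).filter_mono nhdsWithin_le_nhds
    filter_upwards [hev, self_mem_nhdsWithin] with t ht0 ht1
    exact hconv.combo_interior_closure_mem_interior hp (subset_closure ha)
      (by linarith [mem_Iio.1 ht1]) ht0.le (by ring)
  -- supporting functional at x
  have hxni : x ∉ interior C := hx.2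
  obtain ⟨f, hf⟩ := geometric_hahn_banach_open_point hconv.interior isOpen_interior hxni
  have hfC : ∀ a ∈ C, f a ≤ f x := by
    intro a ha
    have h1 : closure (interior C) ⊆ {z | f z ≤ f x} :=
      closure_minimal (fun z hz => (hf z hz).le)
        (isClosed_le f.continuous continuous_const)
    exact h1 (hCsub ha)
  set γ : ℂ := ((f 1 : ℝ) : ℂ) - ((f Complex.I : ℝ) : ℂ) * Complex.I with hγdef
  have hfγ : ∀ z : ℂ, f z = (γ * z).re := by
    intro z
    have h1 : f z = z.re * f 1 + z.im * f Complex.I := by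
      conv_lhs => rw [show z = z.re • (1 : ℂ) + z.im • Complex.I by
        rw [Complex.real_smul, Complex.real_smul, mul_one, Complex.re_add_im]]
      rw [map_add, map_smul, map_smul, smul_eq_mul, smul_eq_mul]
    rw [h1, hγdef]
    simp [Complex.mul_re, Complex.sub_re, Complex.sub_im, Complex.mul_im]
    ring
  have hball_le : ∀ z : ℂ, ‖z‖ < r → (γ * z).re ≤ (γ * u).re := by
    intro z hz
    have hmem : p + z ∈ ball p r := by
      rw [mem_ball, Complex.dist_eq]
      simpa using hz
    have h1 : p + z ∈ C := interior_subset (hball hmem)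
    have h2 := hfC _ h1
    rw [hfγ, hfγ] at h2
    have e1 : γ * (p + z) = γ * p + γ * z := by ring
    have e2 : γ * x = γ * p + γ * u := by rw [hudef]; ring
    rw [e1, e2, Complex.add_re, Complex.add_re] at h2
    linarith
  have hγne : γ ≠ 0 := by
    intro h
    have h1 := hf p hp
    rw [hfγ, hfγ, h] at h1
    simp at h1
  set g : ℝ := ‖γ‖ with hgdef
  have hg_pos : 0 < g := norm_pos_iff.mpr hγne
  have h0 : 0 ≤ (γ * u).re := by
    have := hball_le 0 (by simpa using hrpos)
    simpa using this
  set A : ℝ := (γ * u).re with hAdef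
  have hkey1 : A ≤ g * r := by
    calc A ≤ ‖γ * u‖ := Complex.re_le_norm _
    _ = g * r := by rw [norm_mul, hu_norm]
  have hkey2 : g * r ≤ A := by
    by_contra hlt
    push_neg at hlt
    have hq : A / g < r := (div_lt_iff₀ hg_pos).2 (by linarith)
    have hq0 : 0 ≤ A / g := div_nonneg h0 hg_pos.le
    set s : ℝ := (A / g + r) / 2 with hsdef
    have hs_lt : s < r := by rw [hsdef]; linarith
    have hAs : A < s * g := by
      have h1 : A / g < s := by rw [hsdef]; linarith
      calc A = A / g * g := (div_mul_cancel₀ A hg_pos.ne').symm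
      _ < s * g := mul_lt_mul_of_pos_right h1 hg_pos
    set z₀ : ℂ := ((s / g : ℝ) : ℂ) * starRingEnd ℂ γ with hz₀
    have habs0 : ‖z₀‖ = s := by
      rw [hz₀, norm_mul, Complex.norm_conj, ← hgdef,
        Complex.norm_of_nonneg (by positivity : (0:ℝ) ≤ s / g)]
      field_simp
    have hre0 : (γ * z₀).re = s * g := by
      rw [show γ * z₀ = ((s / g : ℝ) : ℂ) * (γ * starRingEnd ℂ γ) from by rw [hz₀]; ring,
        Complex.mul_conj, Complex.normSq_eq_norm_sq, ← hgdef,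
        ← Complex.ofReal_mul, Complex.ofReal_re]
      field_simp
    have hz0 := hball_le z₀ (by rw [habs0]; exact hs_lt)
    rw [hre0] at hz0
    linarith
  have hkeye : A = g * r := le_antisymm hkey1 hkey2
  have him : (γ * u).im = 0 := by
    have h1 : ‖γ * u‖ = g * r := by rw [norm_mul, hu_norm]
    have h2 : ‖γ * u‖ ^ 2 = (γ * u).re ^ 2 + (γ * u).im ^ 2 := by
      rw [Complex.sq_norm, Complex.normSq_apply]; ring
    have h3 : (γ * u).im ^ 2 = 0 := by
      have h4 : (γ * u).re = g * r := hkeye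
      nlinarith
    exact pow_eq_zero_iff (by norm_num) |>.1 h3
  have hγu : γ * u = ((g * r : ℝ) : ℂ) := by
    apply Complex.ext
    · rw [show (γ * u).re = A from rfl, hkeye]; simp
    · rw [him]; simp
  have hconj : u * starRingEnd ℂ u = ((r ^ 2 : ℝ) : ℂ) := by
    rw [Complex.mul_conj, Complex.normSq_eq_norm_sq, hu_norm]
  have hγ_eq : (r : ℂ) * γ = (g : ℂ) * starRingEnd ℂ u := by
    have h1 : γ * ((r ^ 2 : ℝ) : ℂ) = ((g * r : ℝ) : ℂ) * starRingEnd ℂ u := by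
      rw [← hconj, ← mul_assoc, hγu]
    apply mul_left_cancel₀ (show (r : ℂ) ≠ 0 from by exact_mod_cast hrne)
    push_cast at h1 ⊢
    linear_combination h1
  -- the key halfplane bound
  have hA : ∀ y ∈ C, (starRingEnd ℂ u * (y - p)).re ≤ r ^ 2 := by
    intro y hy
    have h1 := hfC y hy
    rw [hfγ, hfγ] at h1
    have h2 : (γ * (y - p)).re ≤ A := by
      have e1 : γ * y = γ * p + γ * (y - p) := by ring
      have e2 : γ * x = γ * p + γ * u := by rw [hudef]; ring
      rw [e1, e2, Complex.add_re, Complex.add_re] at h1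
      linarith
    have h3 : g * (starRingEnd ℂ u * (y - p)).re ≤ g * r ^ 2 := by
      have e4 : (g : ℂ) * (starRingEnd ℂ u * (y - p)) = (r : ℂ) * (γ * (y - p)) := by
        rw [← mul_assoc, ← hγ_eq, mul_assoc]
      calc g * (starRingEnd ℂ u * (y - p)).re
          = ((g : ℂ) * (starRingEnd ℂ u * (y - p))).re := (Complex.re_ofReal_mul _ _).symm
        _ = ((r : ℂ) * (γ * (y - p))).re := by rw [e4]
        _ = r * (γ * (y - p)).re := Complex.re_ofReal_mul _ _
        _ ≤ r * (g * r) := mul_le_mul_of_nonneg_left (by rw [hkeye] at h2; exact h2) hrpos.le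
        _ = g * r ^ 2 := by ring
    exact le_of_mul_le_mul_left h3 hg_pos
  -- rotation invariance
  have hrot : ∀ n : ℕ, ∀ y ∈ C, rot p ((n : ℝ) * (2 * Real.pi / kC)) y ∈ C :=
    rot_mem hsym
  -- cosine bounds
  set ck : ℝ := Real.cos (Real.pi / kC) with hck
  have hπk_le : Real.pi / kC ≤ Real.pi / 9 :=
    div_le_div_of_nonneg_left Real.pi_pos.le (by norm_num) hkC9R
  have hck_ge : Real.cos (Real.pi / 9) ≤ ck :=
    Real.cos_le_cos_of_nonneg_of_le_pi (by positivity)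
      (by linarith [Real.pi_pos]) hπk_le
  have h49 : Real.cos (Real.pi / 4) < Real.cos (Real.pi / 9) :=
    Real.cos_lt_cos_of_nonneg_of_le_pi (by positivity)
      (by linarith [Real.pi_pos]) (by linarith [Real.pi_pos])
  have hck_gt : Real.sqrt 2 / 2 < ck := by
    rw [← Real.cos_pi_div_four]; linarith
  have hck_pos : 0 < ck := lt_trans (by positivity) hck_gt
  -- the per-point bound
  have hM : ∀ y ∈ C, dist p y * ck ≤ r := by
    intro y hy
    set w : ℂ := y - p with hw
    set z : ℂ := starRingEnd ℂ u * w with hz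
    have habsz : ‖z‖ = r * dist p y := by
      rw [hz, norm_mul, Complex.norm_conj, hu_norm, ← Complex.dist_eq, dist_comm]
    set ψ : ℝ := z.arg with hψ
    set t : ℝ := -ψ * ((kC : ℝ) / (2 * Real.pi)) with ht
    set j0 : ℤ := round t with hj0def
    have hj0 : |t - (j0 : ℝ)| ≤ 1 / 2 := by
      rw [hj0def]; exact_mod_cast abs_sub_round t
    have hψ_le : ψ ≤ Real.pi := Complex.arg_le_pi z
    have hψ_gt : -Real.pi < ψ := Complex.neg_pi_lt_arg z
    have hc : (0 : ℝ) < (kC : ℝ) / (2 * Real.pi) := by positivity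
    have ht_lb : -((kC : ℝ)) / 2 ≤ t := by
      have h1 : (-Real.pi) * ((kC : ℝ) / (2 * Real.pi)) ≤ t := by
        rw [ht]
        exact mul_le_mul_of_nonneg_right (by linarith) hc.le
      have h2 : (-Real.pi) * ((kC : ℝ) / (2 * Real.pi)) = -((kC : ℝ)) / 2 := by
        field_simp
      linarith
    have hj0_lb : (0 : ℤ) ≤ j0 + kC := by
      have h1 : t - 1 / 2 ≤ (j0 : ℝ) := by
        have := abs_le.1 hj0
        linarith [this.1]
      have h2 : (0 : ℝ) ≤ (j0 : ℝ) + kC := by linarith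
      exact_mod_cast h2
    set n : ℕ := (j0 + kC).toNat with hndef
    have hn : (n : ℝ) = (j0 : ℝ) + kC := by
      have h1 : ((n : ℤ) : ℝ) = ((j0 + kC : ℤ) : ℝ) := by
        rw [hndef, Int.toNat_of_nonneg hj0_lb]
      push_cast at h1
      push_cast
      linarith
    set θ : ℝ := (n : ℝ) * (2 * Real.pi / kC) with hθ
    have hyC : rot p θ y ∈ C := hrot n y hy
    have hAy := hA _ hyC
    have e1 : rot p θ y - p = Complex.exp ((θ : ℂ) * Complex.I) * w := by
      rw [hw]
      simp only [rot]
      ring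
    have e2 : starRingEnd ℂ u * (Complex.exp ((θ : ℂ) * Complex.I) * w)
        = Complex.exp ((θ : ℂ) * Complex.I) * z := by
      rw [hz]; ring
    have e3 : Complex.exp ((θ : ℂ) * Complex.I) * z
        = (‖z‖ : ℂ) * Complex.exp (((θ + ψ : ℝ) : ℂ) * Complex.I) := by
      conv_lhs => rw [← Complex.norm_mul_exp_arg_mul_I z]
      rw [Complex.ofReal_add, add_mul, Complex.exp_add, ← hψ]
      ring
    have e4 : ((‖z‖ : ℂ) * Complex.exp (((θ + ψ : ℝ) : ℂ) * Complex.I)).re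
        = ‖z‖ * Real.cos (θ + ψ) := by
      rw [Complex.re_ofReal_mul, Complex.exp_ofReal_mul_I_re]
    have h5 : ‖z‖ * Real.cos (θ + ψ) ≤ r ^ 2 := by
      calc ‖z‖ * Real.cos (θ + ψ)
          = ((‖z‖ : ℂ) * Complex.exp (((θ + ψ : ℝ) : ℂ) * Complex.I)).re := e4.symm
        _ = (starRingEnd ℂ u * (rot p θ y - p)).re := by rw [e1, e2, e3]
        _ ≤ r ^ 2 := hAy
    have hψt : ψ = -t * (2 * Real.pi / kC) := by
      rw [ht]
      field_simp
    have hθψ : θ + ψ = (2 * Real.pi / kC) * ((j0 : ℝ) - t) + 2 * Real.pi := by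
      rw [hθ, hn, hψt]
      field_simp
      ring
    have hcos : ck ≤ Real.cos (θ + ψ) := by
      rw [hθψ, Real.cos_add_two_pi]
      have ha : |(2 * Real.pi / kC) * ((j0 : ℝ) - t)| ≤ Real.pi / kC := by
        rw [abs_mul, abs_of_pos (by positivity : (0 : ℝ) < 2 * Real.pi / kC), abs_sub_comm]
        calc 2 * Real.pi / kC * |t - (j0 : ℝ)| ≤ 2 * Real.pi / kC * (1 / 2) :=
              mul_le_mul_of_nonneg_left hj0 (by positivity)
          _ = Real.pi / kC := by ring
      calc ck = Real.cos (Real.pi / kC) := rfl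
        _ ≤ Real.cos |(2 * Real.pi / kC) * ((j0 : ℝ) - t)| :=
            Real.cos_le_cos_of_nonneg_of_le_pi (abs_nonneg _)
              (by
                have : Real.pi / kC ≤ Real.pi := div_le_self Real.pi_pos.le (by linarith)
                linarith) ha
        _ = Real.cos ((2 * Real.pi / kC) * ((j0 : ℝ) - t)) := Real.cos_abs _
    have h6 : ‖z‖ * ck ≤ r ^ 2 :=
      le_trans (mul_le_mul_of_nonneg_left hcos (norm_nonneg z)) h5
    rw [habsz] at h6
    have h7 : r * (dist p y * ck) ≤ r * r := by
      have h8 : r * (dist p y * ck) = r * dist p y * ck := by ring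
      have h9 : r * r = r ^ 2 := by ring
      rw [h8, h9]; exact h6
    have := le_of_mul_le_mul_left h7 hrpos
    linarith
  -- bound on the circumradius
  have hMle : ∀ y ∈ C, dist p y ≤ r / ck := fun y hy => (le_div_iff₀ hck_pos).2 (hM y hy)
  have hRle : circumrad C p ≤ r / ck := by
    apply Real.iSup_le _ (by positivity)
    intro y
    apply Real.iSup_le _ (by positivity)
    intro hy
    exact hMle y hy
  have h2sqrt : Real.sqrt 2 * Real.sqrt 3 = Real.sqrt 6 := by
    rw [← Real.sqrt_mul (by norm_num : (0:ℝ) ≤ 2) 3]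
    norm_num
  have h6lt : (2 : ℝ) < Real.sqrt 6 := by
    nlinarith [Real.sq_sqrt (show (0:ℝ) ≤ 6 by norm_num), Real.sqrt_nonneg 6]
  have hsq : r / ck < Real.sqrt 3 * r := by
    rw [div_lt_iff₀ hck_pos]
    have hs3 : (0 : ℝ) < Real.sqrt 3 := Real.sqrt_pos.2 (by norm_num)
    have c1 : Real.sqrt 3 * r * (Real.sqrt 2 / 2) < Real.sqrt 3 * r * ck :=
      mul_lt_mul_of_pos_left hck_gt (by positivity)
    have c2 : Real.sqrt 3 * r * (Real.sqrt 2 / 2) = Real.sqrt 6 / 2 * r := by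
      rw [← h2sqrt]; ring
    have c3 : r < Real.sqrt 6 / 2 * r := by nlinarith
    linarith
  have hRlt : circumrad C p < Real.sqrt 3 * r := lt_of_le_of_lt hRle hsq
  have h23 : 2 * Real.sin (Real.pi / 3) = Real.sqrt 3 := by
    rw [Real.sin_pi_div_three]; ring
  -- the lower bound on dM
  have hmm : (m : ℝ) ≠ 0 := by
    have : 3 ≤ m := by omega
    exact_mod_cast (by omega : m ≠ 0)
  have hang : (m : ℝ) * (2 * Real.pi / kC) = 2 * Real.pi / 3 := by
    rw [hm]
    push_cast
    field_simp
  have hx3C : rot p (2 * Real.pi / 3) x ∈ C := by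
    have := hrot m x hxC
    rwa [hang] at this
  have hxS : x ∈ sector p x 3 := by
    refine ⟨1, 0, by norm_num, le_refl 0, ?_⟩
    push_cast
    ring
  have hx3S : rot p (2 * Real.pi / 3) x ∈ sector p x 3 := by
    refine ⟨0, 1, le_refl 0, by norm_num, ?_⟩
    push_cast
    ring
  have hdist : dist x (rot p (2 * Real.pi / 3) x) = Real.sqrt 3 * r := by
    rw [Complex.dist_eq]
    have e : x - rot p (2 * Real.pi / 3) x
        = (1 - Complex.exp (((2 * Real.pi / 3 : ℝ) : ℂ) * Complex.I)) * u := by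
      rw [hudef]
      simp only [rot]
      ring
    rw [e, norm_mul, hu_norm]
    congr 1
    have hcos23 : Real.cos (2 * Real.pi / 3) = -(1 / 2) := by
      rw [show (2 * Real.pi / 3) = Real.pi - Real.pi / 3 by ring, Real.cos_pi_sub,
        Real.cos_pi_div_three]
    have hsin23 : Real.sin (2 * Real.pi / 3) = Real.sqrt 3 / 2 := by
      rw [show (2 * Real.pi / 3) = Real.pi - Real.pi / 3 by ring, Real.sin_pi_sub,
        Real.sin_pi_div_three]
    have hre : (1 - Complex.exp (((2 * Real.pi / 3 : ℝ) : ℂ) * Complex.I)).re = 3 / 2 := by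
      rw [Complex.sub_re, Complex.exp_ofReal_mul_I_re, hcos23]
      norm_num
    have him2 : (1 - Complex.exp (((2 * Real.pi / 3 : ℝ) : ℂ) * Complex.I)).im
        = -(Real.sqrt 3 / 2) := by
      rw [Complex.sub_im, Complex.exp_ofReal_mul_I_im, hsin23]
      norm_num
    have h3 : Real.sqrt 3 * Real.sqrt 3 = 3 := Real.mul_self_sqrt (by norm_num)
    rw [Complex.norm_def, Complex.normSq_apply, hre, him2]
    rw [show (3 / 2 : ℝ) * (3 / 2) + -(Real.sqrt 3 / 2) * -(Real.sqrt 3 / 2) = 3 from by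
      linear_combination (1 / 4 : ℝ) * h3]
  have hdle : Real.sqrt 3 * r ≤ dM C p x 3 := by
    rw [← hdist]
    exact Metric.dist_le_diam_of_mem (hcpt.isBounded.subset inter_subset_left)
      ⟨hxC, hxS⟩ ⟨hx3C, hx3S⟩
  refine ⟨?_, ?_, h23⟩
  · exact (lt_of_lt_of_le hRlt hdle).ne'
  · calc circumrad C p < Real.sqrt 3 * r := hRlt
      _ = 2 * r * Real.sin (Real.pi / 3) := by rw [Real.sin_pi_div_three]; ring
end
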